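/- arXiv:1311.5671 — 3 statements merged into one kernel-verified Lean document; each statement's English description precedes it below -/
import Mathlib

section
/- Let m1, m2, m3, m4 be integers with mi ≥ 2 for all i and Σ_{i=1}^{4}(1 − 1/mi) > 2. Then Σ_{i=1}^{4}(1 − 1/mi) ≥ 2 + 1/6. -/
/-- For integers `m₁, m₂, m₃, m₄ ≥ 2` with `Σ (1 - 1/mᵢ) > 2`, one has
`Σ (1 - 1/mᵢ) ≥ 2 + 1/6`. -/
theorem stmt1 (m₁ m₂ m₃ m₄ : ℤ) (h₁ : 2 ≤ m₁) (h₂ : 2 ≤ m₂) (h₃ : 2 ≤ m₃) (h₄ : 2 ≤ m₄)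
    (h : (2 : ℚ) < (1 - 1 / m₁) + (1 - 1 / m₂) + (1 - 1 / m₃) + (1 - 1 / m₄)) :
    2 + 1 / 6 ≤ (1 - 1 / (m₁ : ℚ)) + (1 - 1 / m₂) + (1 - 1 / m₃) + (1 - 1 / m₄) := by
  have b2 : ∀ m : ℤ, 2 ≤ m → (1:ℚ)/m ≤ 1/2 := by
    intro m hm
    apply one_div_le_one_div_of_le (by norm_num)
    exact_mod_cast hm
  have b3 : ∀ m : ℤ, 3 ≤ m → (1:ℚ)/m ≤ 1/3 := by
    intro m hm
    apply one_div_le_one_div_of_le (by norm_num)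
    exact_mod_cast hm
  have t1 := b2 m₁ h₁
  have t2 := b2 m₂ h₂
  have t3 := b2 m₃ h₃
  have t4 := b2 m₄ h₄
  have hne : ¬ (m₁ = 2 ∧ m₂ = 2 ∧ m₃ = 2 ∧ m₄ = 2) := by
    rintro ⟨rfl, rfl, rfl, rfl⟩
    norm_num at h
  have hcase : 3 ≤ m₁ ∨ 3 ≤ m₂ ∨ 3 ≤ m₃ ∨ 3 ≤ m₄ := by omega
  rcases hcase with g | g | g | g <;> have := b3 _ g <;> linarith
end

section
/- Let G be a finite group and let τ_1 = (m_{1,1},…,m_{1,r_1}) and τ_2 = (m_{2,1},…,m_{2,r_2}) be hyperbolic types. Then the number of Hurwitz components satisfies h(G;τ_1,τ_2) ≤ |G|^{r_1 + r_2 − 2}, and consequently h(G;τ_1,τ_2) ≤ (4·42²·χ(G;τ_1,τ_2))^{r_1 + r_2 − 2}. -/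
/-- A Hurwitz move: replaces consecutive entries `x, y` by `y, y⁻¹ * x * y`. -/
def HurwitzMove {G : Type*} [Group G] (L₁ L₂ : List G) : Prop :=
  ∃ (A B : List G) (x y : G), L₁ = A ++ x :: y :: B ∧ L₂ = A ++ y :: (y⁻¹ * x * y) :: B

/-- A spherical system of generators of `G` of unordered type `τ`. -/
def SphSys {G : Type*} [Group G] (τ : List ℕ) (L : List G) : Prop :=
  L.prod = 1 ∧ Subgroup.closure {x | x ∈ L} = ⊤ ∧ List.Perm (L.map orderOf) τ

/-- `Σ(V)`: the union of all conjugates of all powers of the entries of `L`. -/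
def SigmaSet {G : Type*} [Group G] (L : List G) : Set G :=
  {a | ∃ (g : G) (j : ℕ), ∃ x ∈ L, a = g * x ^ j * g⁻¹}

/-- `U(G;τ₁,τ₂)`: the set of unmixed ramification structures of type `(τ₁,τ₂)` on `G`. -/
def URam (G : Type*) [Group G] (τ₁ τ₂ : List ℕ) : Set (List G × List G) :=
  {P | SphSys τ₁ P.1 ∧ SphSys τ₂ P.2 ∧ SigmaSet P.1 ∩ SigmaSet P.2 = {1}}

/-- The elementary relations on pairs of systems of generators: Hurwitz moves in either
component, a simultaneous automorphism of `G`, or the swap of the two components. -/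
def RamRel {G : Type*} [Group G] (P Q : List G × List G) : Prop :=
  (HurwitzMove P.1 Q.1 ∧ P.2 = Q.2) ∨
  (P.1 = Q.1 ∧ HurwitzMove P.2 Q.2) ∨
  (∃ φ : G ≃* G, Q.1 = P.1.map φ ∧ Q.2 = P.2.map φ) ∨
  (Q = (P.2, P.1))

/-- `h(G;τ₁,τ₂)`: the number of Hurwitz components, i.e. the number of orbits of
`U(G;τ₁,τ₂)` under the equivalence generated by `RamRel`. -/
noncomputable def hCount (G : Type*) [Group G] (τ₁ τ₂ : List ℕ) : ℕ :=
  Nat.card (Quot (fun P Q : ↥(URam G τ₁ τ₂) => RamRel P.1 Q.1))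

/-- `χ(G;τ₁,τ₂)`, the Euler characteristic attached to `G` and a pair of types. -/
noncomputable def chiNum (G : Type*) [Group G] (τ₁ τ₂ : List ℕ) : ℝ :=
  (Nat.card G : ℝ) *
    (-2 + (τ₁.map (fun m => 1 - 1 / (m : ℝ))).sum) *
    (-2 + (τ₂.map (fun m => 1 - 1 / (m : ℝ))).sum) / 4

/-- A type `τ = (m₁,…,m_r)` is hyperbolic if all `mᵢ ≥ 2` and `Σ (1 - 1/mᵢ) > 2`. -/
def IsHyperbolicType (τ : List ℕ) : Prop :=
  (∀ m ∈ τ, 2 ≤ m) ∧ 2 < (τ.map (fun m => 1 - 1 / (m : ℝ))).sum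

private lemma inv_bd {k m : ℕ} (hk : 0 < k) (h : k ≤ m) : (1:ℝ)/m ≤ 1/k := by
  apply one_div_le_one_div_of_le
  · exact_mod_cast hk
  · exact_mod_cast h

private lemma inv_pos' {m : ℕ} (h : 2 ≤ m) : (0:ℝ) < 1/m := by
  have : (0:ℝ) < m := by exact_mod_cast Nat.lt_of_lt_of_le (by norm_num) h
  positivity

private lemma sum_norm (τ : List ℕ) :
    (τ.map (fun m => 1 - 1 / (m : ℝ))).sum
      = (τ.map (fun m : ℕ => 1 - 1/(m:ℝ))).sum := by
  congr 1
  induction τ with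
  | nil => rfl
  | cons a t ih => simp_all

private lemma key3s (a b c : ℕ) (ha : 2 ≤ a) (hab : a ≤ b) (hbc : b ≤ c)
    (h : (1:ℝ)/a + 1/b + 1/c < 1) : (1:ℝ)/a + 1/b + 1/c ≤ 41/42 := by
  have hb : 2 ≤ b := le_trans ha hab
  have hc : 2 ≤ c := le_trans hb hbc
  by_cases ha4 : 4 ≤ a
  · have h1 := inv_bd (by norm_num) ha4
    have h2 := inv_bd (by norm_num) (le_trans ha4 hab)
    have h3 := inv_bd (by norm_num) (le_trans (le_trans ha4 hab) hbc)
    push_cast at h1 h2 h3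
    linarith
  · push_neg at ha4
    interval_cases a
    · -- a = 2
      push_cast at h ⊢
      by_cases hb5 : 5 ≤ b
      · have h2 := inv_bd (by norm_num) hb5
        have h3 := inv_bd (by norm_num) (le_trans hb5 hbc)
        push_cast at h2 h3
        linarith
      · push_neg at hb5
        interval_cases b
        · -- b = 2 : impossible
          have := inv_pos' hc
          push_cast at h ⊢
          linarith
        · -- b = 3
          push_cast at h ⊢
          have h6 : (1:ℝ)/c < 1/6 := by linarith
          have hc7 : 7 ≤ c := by
            by_contra hc7
            push_neg at hc7
            have h6' := inv_bd (k := c) (m := 6) (by omega) (by omega)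
            push_cast at h6'
            linarith
          have h3 := inv_bd (by norm_num) hc7
          push_cast at h3
          linarith
        · -- b = 4
          push_cast at h ⊢
          have h5 : (1:ℝ)/c < 1/4 := by linarith
          have hc5 : 5 ≤ c := by
            by_contra hc5
            push_neg at hc5
            have h4' := inv_bd (k := c) (m := 4) (by omega) (by omega)
            push_cast at h4'
            linarith
          have h3 := inv_bd (by norm_num) hc5
          push_cast at h3
          linarith
    · -- a = 3
      push_cast at h ⊢
      by_cases hb4 : 4 ≤ b
      · have h2 := inv_bd (by norm_num) hb4
        have h3 := inv_bd (by norm_num) (le_trans hb4 hbc)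
        push_cast at h2 h3
        linarith
      · push_neg at hb4
        have hb3 : b = 3 := by omega
        subst hb3
        push_cast at h ⊢
        have h4 : (1:ℝ)/c < 1/3 := by linarith
        have hc4 : 4 ≤ c := by
          by_contra hc4
          push_neg at hc4
          have h3' := inv_bd (k := c) (m := 3) (by omega) (by omega)
          push_cast at h3'
          linarith
        have h3 := inv_bd (by norm_num) hc4
        push_cast at h3
        linarith

private lemma key3 (a b c : ℕ) (ha : 2 ≤ a) (hb : 2 ≤ b) (hc : 2 ≤ c)
    (h : (1:ℝ)/a + 1/b + 1/c < 1) : (1:ℝ)/a + 1/b + 1/c ≤ 41/42 := by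
  rcases le_total a b with hab | hab <;> rcases le_total b c with hbc | hbc <;>
    rcases le_total a c with hac | hac
  · exact key3s a b c ha hab hbc h
  · exact key3s a b c ha hab hbc h
  · have := key3s a c b ha hac hbc (by linarith); linarith
  · have := key3s c a b hc hac hab (by linarith); linarith
  · have := key3s b a c hb hab hac (by linarith); linarith
  · have := key3s b c a hb hbc hac (by linarith); linarith
  · have := key3s c b a hc hbc hab (by linarith); linarith
  · have := key3s c b a hc hbc hab (by linarith); linarith

private lemma key4 (a b c d : ℕ) (ha : 2 ≤ a) (hb : 2 ≤ b) (hc : 2 ≤ c) (hd : 2 ≤ d)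
    (h : (1:ℝ)/a + 1/b + 1/c + 1/d < 2) :
    (1:ℝ)/a + 1/b + 1/c + 1/d ≤ 2 - 1/42 := by
  have Ha := inv_bd (m := a) (by norm_num) ha
  have Hb := inv_bd (m := b) (by norm_num) hb
  have Hc := inv_bd (m := c) (by norm_num) hc
  have Hd := inv_bd (m := d) (by norm_num) hd
  push_cast at Ha Hb Hc Hd
  by_cases e1 : a = 2
  · by_cases e2 : b = 2
    · by_cases e3 : c = 2
      · by_cases e4 : d = 2
        · subst e1; subst e2; subst e3; subst e4; push_cast at h; linarith
        · have h3 : 3 ≤ d := by omega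
          have := inv_bd (m := d) (by norm_num) h3
          push_cast at this; linarith
      · have h3 : 3 ≤ c := by omega
        have := inv_bd (m := c) (by norm_num) h3
        push_cast at this; linarith
    · have h3 : 3 ≤ b := by omega
      have := inv_bd (m := b) (by norm_num) h3
      push_cast at this; linarith
  · have h3 : 3 ≤ a := by omega
    have := inv_bd (m := a) (by norm_num) h3
    push_cast at this; linarith

private lemma half_len_le (L : List ℕ) (h : ∀ m ∈ L, 2 ≤ m) :
    (L.length : ℝ) / 2 ≤ (L.map (fun m : ℕ => 1 - 1/(m:ℝ))).sum := by
  induction L with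
  | nil => simp
  | cons a t ih =>
    have ha := inv_bd (m := a) (by norm_num) (h a (by simp))
    push_cast at ha
    have := ih (fun m hm => h m (by simp [hm]))
    simp only [List.map_cons, List.sum_cons, List.length_cons]
    rw [Nat.cast_add, Nat.cast_one]
    linarith

private lemma sum_le_len' (L : List ℕ) :
    (L.map (fun m : ℕ => 1 - 1/(m:ℝ))).sum ≤ (L.length : ℝ) := by
  induction L with
  | nil => simp
  | cons a t ih =>
    simp only [List.map_cons, List.sum_cons, List.length_cons]
    rw [Nat.cast_add, Nat.cast_one]
    have : (0:ℝ) ≤ 1/(a:ℝ) := by positivity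
    linarith

private lemma excess (τ : List ℕ) (h : IsHyperbolicType τ) :
    2 + 1/42 ≤ (τ.map (fun m => 1 - 1/(m:ℝ))).sum := by
  obtain ⟨h2, hs⟩ := h
  rw [sum_norm] at hs ⊢
  rcases τ with _ | ⟨a, _ | ⟨b, _ | ⟨c, _ | ⟨d, _ | ⟨e, t⟩⟩⟩⟩⟩
  · norm_num at hs
  · have := inv_pos' (h2 a (by simp))
    simp only [List.map_cons, List.map_nil, List.sum_cons, List.sum_nil, add_zero] at hs
    linarith
  · have ia := inv_pos' (h2 a (by simp))
    have ib := inv_pos' (h2 b (by simp))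
    simp only [List.map_cons, List.map_nil, List.sum_cons, List.sum_nil, add_zero] at hs
    linarith
  · have ha := h2 a (by simp)
    have hb := h2 b (by simp)
    have hc := h2 c (by simp)
    simp only [List.map_cons, List.map_nil, List.sum_cons, List.sum_nil, add_zero] at hs ⊢
    have := key3 a b c ha hb hc (by linarith)
    linarith
  · have ha := h2 a (by simp)
    have hb := h2 b (by simp)
    have hc := h2 c (by simp)
    have hd := h2 d (by simp)
    simp only [List.map_cons, List.map_nil, List.sum_cons, List.sum_nil, add_zero] at hs ⊢
    have := key4 a b c d ha hb hc hd (by linarith)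
    linarith
  · have hlen := half_len_le (a::b::c::d::e::t) h2
    have h5 : (5:ℝ) ≤ ((a::b::c::d::e::t).length : ℝ) := by
      simp only [List.length_cons]
      push_cast
      linarith [Nat.cast_nonneg (α := ℝ) t.length]
    linarith

private lemma list_eq_of_dropLast {G : Type*} [Group G] (L M : List G)
    (hlen : L.length = M.length) (hL : L.prod = 1) (hM : M.prod = 1)
    (h : L.dropLast = M.dropLast) : L = M := by
  rcases eq_or_ne L [] with rfl | hLne
  · exact (List.length_eq_zero_iff.mp hlen.symm).symm
  · have hMne : M ≠ [] := by
      intro hm; subst hm; exact hLne (List.length_eq_zero_iff.mp hlen)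
    have key : ∀ (N : List G), N ≠ [] → N.prod = 1 → N = N.dropLast ++ [(N.dropLast.prod)⁻¹] := by
      intro N hne hprod
      conv_lhs => rw [← List.dropLast_append_getLast hne]
      congr 1
      have h1 : N.dropLast.prod * N.getLast hne = 1 := by
        have h2 : (N.dropLast ++ [N.getLast hne]).prod = 1 := by
          rw [List.dropLast_append_getLast hne]; exact hprod
        simpa using h2
      rw [(inv_eq_of_mul_eq_one_right h1).symm]
    rw [key L hLne hL, key M hMne hM, h]

/-- Proposition 4.1(ii): for a finite group `G` and hyperbolic types `τ₁, τ₂`,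
`h(G;τ₁,τ₂) ≤ |G|^(r₁+r₂-2)` and hence `h(G;τ₁,τ₂) ≤ (4·42²·χ(G;τ₁,τ₂))^(r₁+r₂-2)`. -/
theorem stmt5 (G : Type*) [Group G] [Finite G] (τ₁ τ₂ : List ℕ)
    (h₁ : IsHyperbolicType τ₁) (h₂ : IsHyperbolicType τ₂) :
    hCount G τ₁ τ₂ ≤ Nat.card G ^ (τ₁.length + τ₂.length - 2) ∧
    (hCount G τ₁ τ₂ : ℝ) ≤ (4 * 42 ^ 2 * chiNum G τ₁ τ₂) ^ (τ₁.length + τ₂.length - 2) := by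
  classical
  have _inst := Fintype.ofFinite G
  have hr₁ : 1 ≤ τ₁.length := by
    rcases τ₁ with _ | ⟨a, t⟩
    · have := h₁.2; rw [sum_norm] at this; norm_num at this
    · simp
  have hr₂ : 1 ≤ τ₂.length := by
    rcases τ₂ with _ | ⟨a, t⟩
    · have := h₂.2; rw [sum_norm] at this; norm_num at this
    · simp
  have hlen1 : ∀ P : ↥(URam G τ₁ τ₂), P.1.1.length = τ₁.length := by
    intro P
    have := P.2.1.2.2.length_eq
    simpa using this
  have hlen2 : ∀ P : ↥(URam G τ₁ τ₂), P.1.2.length = τ₂.length := by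
    intro P
    have := P.2.2.1.2.2.length_eq
    simpa using this
  set f : ↥(URam G τ₁ τ₂) →
      List.Vector G (τ₁.length - 1) × List.Vector G (τ₂.length - 1) :=
    fun P => (⟨P.1.1.dropLast, by rw [List.length_dropLast, hlen1 P]⟩,
              ⟨P.1.2.dropLast, by rw [List.length_dropLast, hlen2 P]⟩) with hf
  have hinj : Function.Injective f := by
    intro P Q h
    have h1 : P.1.1.dropLast = Q.1.1.dropLast := congrArg (fun z => z.1.1) h
    have h2 : P.1.2.dropLast = Q.1.2.dropLast := congrArg (fun z => z.2.1) h
    have e1 : P.1.1 = Q.1.1 :=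
      list_eq_of_dropLast _ _ (by rw [hlen1 P, hlen1 Q]) P.2.1.1 Q.2.1.1 h1
    have e2 : P.1.2 = Q.1.2 :=
      list_eq_of_dropLast _ _ (by rw [hlen2 P, hlen2 Q]) P.2.2.1.1 Q.2.2.1.1 h2
    exact Subtype.ext (Prod.ext e1 e2)
  have hfinU : Finite ↥(URam G τ₁ τ₂) := Finite.of_injective f hinj
  have hcard1 : hCount G τ₁ τ₂ ≤ Nat.card ↥(URam G τ₁ τ₂) :=
    Nat.card_le_card_of_surjective _ (fun q => Quot.exists_rep q)
  have hcard2 : Nat.card ↥(URam G τ₁ τ₂) ≤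
      Nat.card (List.Vector G (τ₁.length - 1) × List.Vector G (τ₂.length - 1)) :=
    Nat.card_le_card_of_injective f hinj
  have hcard3 : Nat.card (List.Vector G (τ₁.length - 1) × List.Vector G (τ₂.length - 1))
      = Nat.card G ^ (τ₁.length + τ₂.length - 2) := by
    rw [Nat.card_prod, Nat.card_eq_fintype_card, Nat.card_eq_fintype_card,
      card_vector, card_vector, Nat.card_eq_fintype_card, ← pow_add]
    congr 1
    omega
  have part1 : hCount G τ₁ τ₂ ≤ Nat.card G ^ (τ₁.length + τ₂.length - 2) := by
    rw [← hcard3]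
    exact le_trans hcard1 hcard2
  refine ⟨part1, ?_⟩
  have hE1 := excess τ₁ h₁
  have hE2 := excess τ₂ h₂
  have hGpos : (1:ℝ) ≤ Nat.card G := by
    exact_mod_cast Nat.one_le_iff_ne_zero.mpr Nat.card_pos.ne'
  have hbase : (Nat.card G : ℝ) ≤ 4 * 42 ^ 2 * chiNum G τ₁ τ₂ := by
    unfold chiNum
    set S₁ := (τ₁.map (fun m => 1 - 1 / (m : ℝ))).sum
    set S₂ := (τ₂.map (fun m => 1 - 1 / (m : ℝ))).sum
    have e1 : (1:ℝ)/42 ≤ -2 + S₁ := by linarith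
    have e2 : (1:ℝ)/42 ≤ -2 + S₂ := by linarith
    have hm : (1:ℝ)/42 * (1/42) ≤ (-2 + S₁) * (-2 + S₂) :=
      mul_le_mul e1 e2 (by norm_num) (by linarith)
    have hG0 : (0:ℝ) ≤ Nat.card G := by linarith
    nlinarith [mul_le_mul_of_nonneg_left hm hG0]
  calc (hCount G τ₁ τ₂ : ℝ) ≤ (Nat.card G : ℝ) ^ (τ₁.length + τ₂.length - 2) := by
        exact_mod_cast part1
    _ ≤ (4 * 42 ^ 2 * chiNum G τ₁ τ₂) ^ (τ₁.length + τ₂.length - 2) :=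
        pow_le_pow_left₀ (Nat.cast_nonneg _) hbase _
end

section
/- For a prime p ≥ 5, let G_p = (ℤ/pℤ)² and τ_p = (p,p,p). Then there exist constants c_1, c_2 > 0 such that for all primes p ≥ 5, c_1 · χ(G_p;τ_p,τ_p)² ≤ h(G_p; τ_p, τ_p) ≤ c_2 · χ(G_p;τ_p,τ_p)², where χ(G_p;τ_p,τ_p) = p² · (3(1 − 1/p) − 2)² / 4 = (p−3)²/4. -/
/-! ### Auxiliary general lemmas -/

set_option linter.unusedSectionVars false

section CommGeneral
variable {G : Type*} [CommGroup G]

lemma HurwitzMove.perm {L₁ L₂ : List G} (h : HurwitzMove L₁ L₂) : L₁.Perm L₂ := by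
  obtain ⟨A, B, x, y, h1, h2⟩ := h
  subst h1; subst h2
  have hc : y⁻¹ * x * y = x := by
    rw [mul_comm y⁻¹ x, mul_assoc, inv_mul_cancel, mul_one]
  rw [hc]
  exact List.Perm.append_left A (List.Perm.swap y x B)

/-- The coarse equivalence containing `RamRel` for abelian groups. -/
def RRel {G : Type*} [Group G] (P Q : List G × List G) : Prop :=
  ∃ φ : G ≃* G, (Q.1.Perm (P.1.map φ) ∧ Q.2.Perm (P.2.map φ)) ∨
    (Q.1.Perm (P.2.map φ) ∧ Q.2.Perm (P.1.map φ))

lemma perm_map_symm {L M : List G} (φ : G ≃* G) (h : L.Perm (M.map φ)) :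
    M.Perm (L.map φ.symm) := by
  have := h.map (φ.symm : G → G)
  rw [List.map_map] at this
  simpa using this.symm

lemma rrel_refl (P : List G × List G) : RRel P P :=
  ⟨MulEquiv.refl G, Or.inl ⟨by simp, by simp⟩⟩

lemma rrel_symm {P Q : List G × List G} (h : RRel P Q) : RRel Q P := by
  obtain ⟨φ, h | h⟩ := h
  · exact ⟨φ.symm, Or.inl ⟨perm_map_symm φ h.1, perm_map_symm φ h.2⟩⟩
  · exact ⟨φ.symm, Or.inr ⟨perm_map_symm φ h.2, perm_map_symm φ h.1⟩⟩

lemma rrel_trans {P Q R : List G × List G} (h1 : RRel P Q) (h2 : RRel Q R) : RRel P R := by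
  obtain ⟨φ, h1⟩ := h1
  obtain ⟨ψ, h2⟩ := h2
  refine ⟨φ.trans ψ, ?_⟩
  have key : ∀ L M : List G, L.Perm (M.map φ) → ∀ N : List G, N.Perm (L.map ψ) →
      N.Perm (M.map (φ.trans ψ)) := by
    intro L M hLM N hN
    refine hN.trans ?_
    have := hLM.map (ψ : G → G)
    rw [List.map_map] at this
    convert this using 2
    rfl
  rcases h1 with ⟨ha, hb⟩ | ⟨ha, hb⟩ <;> rcases h2 with ⟨hc, hd⟩ | ⟨hc, hd⟩
  · exact Or.inl ⟨key _ _ ha _ hc, key _ _ hb _ hd⟩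
  · exact Or.inr ⟨key _ _ hb _ hc, key _ _ ha _ hd⟩
  · exact Or.inr ⟨key _ _ ha _ hc, key _ _ hb _ hd⟩
  · exact Or.inl ⟨key _ _ hb _ hc, key _ _ ha _ hd⟩

lemma ramrel_rrel {P Q : List G × List G} (h : RamRel P Q) : RRel P Q := by
  rcases h with ⟨h1, h2⟩ | ⟨h1, h2⟩ | ⟨φ, h1, h2⟩ | h
  · exact ⟨MulEquiv.refl G, Or.inl ⟨by simpa using h1.perm.symm, by simp [h2]⟩⟩
  · exact ⟨MulEquiv.refl G, Or.inl ⟨by simp [h1], by simpa using h2.perm.symm⟩⟩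
  · exact ⟨φ, Or.inl ⟨by rw [h1], by rw [h2]⟩⟩
  · exact ⟨MulEquiv.refl G, Or.inr ⟨by simp [h], by simp [h]⟩⟩

lemma eqvgen_rrel {τ₁ τ₂ : List ℕ} {A B : ↥(URam G τ₁ τ₂)}
    (h : Relation.EqvGen (fun P Q : ↥(URam G τ₁ τ₂) => RamRel P.1 Q.1) A B) :
    RRel A.1 B.1 := by
  induction h with
  | rel _ _ h => exact ramrel_rrel h
  | refl _ => exact rrel_refl _
  | symm _ _ _ ih => exact rrel_symm ih
  | trans _ _ _ _ _ ih1 ih2 => exact rrel_trans ih1 ih2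

lemma sigmaset_comm (L : List G) :
    SigmaSet L = {a | ∃ x ∈ L, ∃ j : ℕ, a = x ^ j} := by
  ext a
  constructor
  · rintro ⟨g, j, x, hx, rfl⟩
    exact ⟨x, hx, j, by rw [mul_comm g _, mul_assoc, mul_inv_cancel, mul_one]⟩
  · rintro ⟨x, hx, j, rfl⟩
    exact ⟨1, j, x, hx, by simp⟩

end CommGeneral

section General
variable {G : Type*} [Group G]

lemma sphsys_map {τ : List ℕ} {L : List G} (φ : G ≃* G) (h : SphSys τ L) :
    SphSys τ (L.map φ) := by
  obtain ⟨h1, h2, h3⟩ := h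
  refine ⟨?_, ?_, ?_⟩
  · have : (L.map (φ : G → G)).prod = φ L.prod := (map_list_prod φ.toMonoidHom L).symm
    rw [this, h1, map_one]
  · have hs : {x | x ∈ L.map φ} = (φ : G → G) '' {x | x ∈ L} := by
      ext a; simp [List.mem_map]
    rw [hs]
    have : Subgroup.closure ((φ : G → G) '' {x | x ∈ L})
        = (Subgroup.closure {x | x ∈ L}).map φ.toMonoidHom :=
      (MonoidHom.map_closure φ.toMonoidHom _).symm
    rw [this, h2]
    exact Subgroup.map_top_of_surjective _ φ.surjective
  · have : (L.map φ).map orderOf = L.map orderOf := by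
      rw [List.map_map]
      congr 1
      funext x
      exact orderOf_injective φ.toMonoidHom φ.injective x
    rw [this]; exact h3

lemma sigmaset_map (φ : G ≃* G) (L : List G) :
    SigmaSet (L.map φ) = (φ : G → G) '' SigmaSet L := by
  ext a
  constructor
  · rintro ⟨g, j, x, hx, rfl⟩
    rw [List.mem_map] at hx
    obtain ⟨x₀, hx₀, rfl⟩ := hx
    exact ⟨φ.symm g * x₀ ^ j * (φ.symm g)⁻¹, ⟨φ.symm g, j, x₀, hx₀, rfl⟩,
      by simp [map_mul, map_pow]⟩
  · rintro ⟨b, ⟨g, j, x, hx, rfl⟩, rfl⟩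
    exact ⟨φ g, j, φ x, List.mem_map_of_mem hx, by simp [map_mul, map_pow]⟩

lemma uram_map {τ₁ τ₂ : List ℕ} {P : List G × List G} (φ : G ≃* G) (h : P ∈ URam G τ₁ τ₂) :
    (P.1.map φ, P.2.map φ) ∈ URam G τ₁ τ₂ := by
  obtain ⟨h1, h2, h3⟩ := h
  refine ⟨sphsys_map φ h1, sphsys_map φ h2, ?_⟩
  show SigmaSet (P.1.map φ) ∩ SigmaSet (P.2.map φ) = {1}
  rw [sigmaset_map, sigmaset_map, ← Set.image_inter φ.injective, h3]
  simp

lemma list_len3 {α : Type*} {l : List α} (h : l.length = 3) : ∃ a b c, l = [a, b, c] := by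
  match l, h with
  | [a, b, c], _ => exact ⟨a, b, c, rfl⟩

lemma sphsys_len {n : ℕ} {L : List G} (h : SphSys [n, n, n] L) : L.length = 3 := by
  have := h.2.2.length_eq
  simpa using this

lemma sphsys_shape {n : ℕ} {L : List G} (h : SphSys [n, n, n] L) :
    ∃ x y, L = [x, y, (x * y)⁻¹] := by
  obtain ⟨a, b, c, rfl⟩ := list_len3 (sphsys_len h)
  refine ⟨a, b, ?_⟩
  have h1 := h.1
  simp only [List.prod_cons, List.prod_nil, mul_one] at h1
  have : c = (a * b)⁻¹ := by
    rw [← mul_assoc] at h1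
    exact eq_inv_of_mul_eq_one_right h1
  rw [this]

lemma sphsys_gen2 {n : ℕ} {L : List G} (h : SphSys [n, n, n] L) :
    Subgroup.closure {L.headD 1, L.tail.headD 1} = ⊤ := by
  obtain ⟨x, y, rfl⟩ := sphsys_shape h
  simp only [List.headD_cons, List.tail_cons]
  have h2 := h.2.1
  rw [eq_top_iff, ← h2]
  refine Subgroup.closure_le _ |>.mpr ?_
  intro a ha
  simp only [List.mem_cons, List.mem_singleton, Set.mem_setOf_eq, List.not_mem_nil, or_false] at ha
  rcases ha with rfl | rfl | rfl
  · exact Subgroup.subset_closure (by simp)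
  · exact Subgroup.subset_closure (by simp)
  · exact inv_mem (mul_mem (Subgroup.subset_closure (by simp))
      (Subgroup.subset_closure (by simp)))

lemma mulequiv_ext_of_closure {s : Set G} (hs : Subgroup.closure s = ⊤) {φ ψ : G ≃* G}
    (h : Set.EqOn (φ : G → G) (ψ : G → G) s) : φ = ψ := by
  have : φ.toMonoidHom = ψ.toMonoidHom := MonoidHom.eq_of_eqOn_dense hs h
  ext g
  exact DFunLike.congr_fun this g

end General

/-! ### The groups `(ℤ/pℤ)²` -/

open Multiplicative

abbrev Gp (p : ℕ) := Multiplicative (ZMod p) × Multiplicative (ZMod p)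

section ZModPart
variable {p : ℕ} [Fact p.Prime]

def mk2 (x y : ZMod p) : Gp p := (ofAdd x, ofAdd y)

lemma mk2_mul (x y x' y' : ZMod p) : mk2 x y * mk2 x' y' = mk2 (x + x') (y + y') := rfl

lemma mk2_one : (1 : Gp p) = mk2 0 0 := rfl

lemma mk2_inj {x y x' y' : ZMod p} (h : mk2 x y = mk2 x' y') : x = x' ∧ y = y' := by
  constructor
  · exact congrArg (fun g => toAdd g.1) h
  · exact congrArg (fun g => toAdd g.2) h

lemma mk2_eq_iff {x y x' y' : ZMod p} : mk2 x y = mk2 x' y' ↔ x = x' ∧ y = y' :=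
  ⟨mk2_inj, by rintro ⟨rfl, rfl⟩; rfl⟩

lemma mk2_pow (x y : ZMod p) (n : ℕ) :
    (mk2 x y) ^ n = mk2 ((n : ZMod p) * x) ((n : ZMod p) * y) := by
  induction n with
  | zero => simp [mk2_one]
  | succ n ih =>
    rw [pow_succ, ih, mk2_mul]
    push_cast
    ring_nf

lemma mk2_eq_one {x y : ZMod p} (h : mk2 x y = 1) : x = 0 ∧ y = 0 := mk2_inj (h.trans mk2_one)

lemma mk2_surj (g : Gp p) : g = mk2 (toAdd g.1) (toAdd g.2) := rfl

lemma orderOf_mk2 {x y : ZMod p} (h : ¬(x = 0 ∧ y = 0)) : orderOf (mk2 x y) = p := by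
  refine orderOf_eq_prime ?_ ?_
  · rw [mk2_pow]
    simp [ZMod.natCast_self, mk2_one]
  · intro hc
    exact h (mk2_eq_one hc)

lemma closure_top {x1 y1 x2 y2 : ZMod p} (hdet : x1 * y2 - x2 * y1 ≠ 0) {s : Set (Gp p)}
    (h1 : mk2 x1 y1 ∈ s) (h2 : mk2 x2 y2 ∈ s) : Subgroup.closure s = ⊤ := by
  rw [eq_top_iff]
  rintro g -
  set d := x1 * y2 - x2 * y1 with hd
  set α : ZMod p := (toAdd g.1 * y2 - toAdd g.2 * x2) / d with hα
  set β : ZMod p := (toAdd g.2 * x1 - toAdd g.1 * y1) / d with hβ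
  have hg : g = (mk2 x1 y1) ^ α.val * (mk2 x2 y2) ^ β.val := by
    rw [mk2_pow, mk2_pow, mk2_mul]
    have hv1 : ((α.val : ℕ) : ZMod p) = α := by
      rw [ZMod.natCast_val, ZMod.cast_id]
    have hv2 : ((β.val : ℕ) : ZMod p) = β := by
      rw [ZMod.natCast_val, ZMod.cast_id]
    rw [hv1, hv2]
    rw [mk2_surj g]
    congr 1
    · rw [hα, hβ]; field_simp; ring
    · rw [hα, hβ]; field_simp; ring
  rw [hg]
  exact mul_mem (pow_mem (Subgroup.subset_closure h1) _) (pow_mem (Subgroup.subset_closure h2) _)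

lemma pow_inter {x1 y1 x2 y2 : ZMod p} (hdet : x1 * y2 - x2 * y1 ≠ 0) {j k : ℕ}
    (h : (mk2 x1 y1) ^ j = (mk2 x2 y2) ^ k) : (mk2 x1 y1) ^ j = 1 := by
  rw [mk2_pow, mk2_pow] at h
  obtain ⟨h1, h2⟩ := mk2_inj h
  have key : (j : ZMod p) * (x1 * y2 - x2 * y1) = 0 := by
    have : (j : ZMod p) * x1 * y2 - (j : ZMod p) * y1 * x2 = 0 := by
      rw [h1, h2]; ring
    calc (j : ZMod p) * (x1 * y2 - x2 * y1)
        = (j : ZMod p) * x1 * y2 - (j : ZMod p) * y1 * x2 := by ring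
      _ = 0 := this
  have hj0 : (j : ZMod p) = 0 := by
    rcases mul_eq_zero.mp key with h | h
    · exact h
    · exact absurd h hdet
  rw [mk2_pow, hj0, zero_mul, zero_mul, mk2_one]

def matEquiv (a b c d : ZMod p) (h : a * d - b * c ≠ 0) : Gp p ≃* Gp p where
  toFun g := mk2 (a * toAdd g.1 + b * toAdd g.2) (c * toAdd g.1 + d * toAdd g.2)
  invFun g := mk2 ((a * d - b * c)⁻¹ * (d * toAdd g.1 - b * toAdd g.2))
    ((a * d - b * c)⁻¹ * (-c * toAdd g.1 + a * toAdd g.2))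
  left_inv g := by
    show mk2 _ _ = g
    conv_rhs => rw [show g = mk2 (toAdd g.1) (toAdd g.2) from rfl]
    rw [mk2_eq_iff]
    unfold mk2
    simp only [toAdd_ofAdd]
    constructor <;> (field_simp; ring)
  right_inv g := by
    show mk2 _ _ = g
    conv_rhs => rw [show g = mk2 (toAdd g.1) (toAdd g.2) from rfl]
    rw [mk2_eq_iff]
    unfold mk2
    simp only [toAdd_ofAdd]
    refine ⟨?_, ?_⟩
    · linear_combination (toAdd g.1) * mul_inv_cancel₀ h
    · linear_combination (toAdd g.2) * mul_inv_cancel₀ h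
  map_mul' g h := by
    show mk2 _ _ = mk2 _ _ * mk2 _ _
    rw [mk2_mul, mk2_eq_iff]
    simp only [Prod.fst_mul, Prod.snd_mul, toAdd_mul]
    constructor <;> ring

lemma matEquiv_mk2 (a b c d : ZMod p) (h : a * d - b * c ≠ 0) (x y : ZMod p) :
    matEquiv a b c d h (mk2 x y) = mk2 (a * x + b * y) (c * x + d * y) := rfl

/-- The fixed first system of generators. -/
def V1 (p : ℕ) : List (Gp p) := [mk2 1 0, mk2 0 1, mk2 (-1) (-1)]

lemma sphsys_V1 : SphSys [p, p, p] (V1 p) := by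
  refine ⟨?_, ?_, ?_⟩
  · show mk2 1 0 * (mk2 0 1 * (mk2 (-1) (-1) * 1)) = 1
    rw [mul_one, mk2_mul, mk2_mul, mk2_one]
    norm_num
  · refine closure_top (x1 := 1) (y1 := 0) (x2 := 0) (y2 := 1) (by norm_num) ?_ ?_ <;>
      simp [V1]
  · have h1 : orderOf (mk2 (1 : ZMod p) 0) = p := orderOf_mk2 (by simp)
    have h2 : orderOf (mk2 (0 : ZMod p) 1) = p := orderOf_mk2 (by simp)
    have h3 : orderOf (mk2 (-1 : ZMod p) (-1)) = p := orderOf_mk2 (by simp)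
    show List.Perm [orderOf (mk2 1 0), orderOf (mk2 0 1), orderOf (mk2 (-1) (-1))] [p, p, p]
    rw [h1, h2, h3]

/-- Second system: parametrized by `s a b c`. -/
noncomputable def tP (s a b c : ZMod p) : ZMod p := s * (c - a) / (b - c)
noncomputable def rP (s a b c : ZMod p) : ZMod p := s * (a - b) / (b - c)

noncomputable def V2 (s a b c : ZMod p) : List (Gp p) :=
  [mk2 s (s * a), mk2 (tP s a b c) (tP s a b c * b), mk2 (rP s a b c) (rP s a b c * c)]

section V2props
variable {s a b c : ZMod p} (hs : s ≠ 0) (ha0 : a ≠ 0) (ha1 : a ≠ 1) (hb0 : b ≠ 0)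
  (hb1 : b ≠ 1) (hc0 : c ≠ 0) (hc1 : c ≠ 1) (hab : a ≠ b) (hac : a ≠ c) (hbc : b ≠ c)

include hs hac hbc in
lemma tP_ne : tP s a b c ≠ 0 := by
  unfold tP
  have h1 : c - a ≠ 0 := sub_ne_zero.mpr (Ne.symm hac)
  have h2 : b - c ≠ 0 := sub_ne_zero.mpr hbc
  exact div_ne_zero (mul_ne_zero hs h1) h2

include hs hab hbc in
lemma rP_ne : rP s a b c ≠ 0 := by
  unfold rP
  have h1 : a - b ≠ 0 := sub_ne_zero.mpr hab
  have h2 : b - c ≠ 0 := sub_ne_zero.mpr hbc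
  exact div_ne_zero (mul_ne_zero hs h1) h2

include hs ha0 ha1 hb0 hb1 hc0 hc1 hab hac hbc in
lemma sphsys_V2 : SphSys [p, p, p] (V2 s a b c) := by
  have hbc' : b - c ≠ 0 := sub_ne_zero.mpr hbc
  have ht := tP_ne hs hac hbc
  have hr := rP_ne hs hab hbc
  refine ⟨?_, ?_, ?_⟩
  · show mk2 s (s * a) * (mk2 _ _ * (mk2 _ _ * 1)) = 1
    rw [mul_one, mk2_mul, mk2_mul, mk2_one, mk2_eq_iff]
    unfold tP rP
    constructor <;> (field_simp; ring)
  · refine closure_top (x1 := s) (y1 := s * a) (x2 := tP s a b c) (y2 := tP s a b c * b)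
      ?_ ?_ ?_
    · have : s * (tP s a b c * b) - tP s a b c * (s * a) = s * tP s a b c * (b - a) := by ring
      rw [this]
      exact mul_ne_zero (mul_ne_zero hs ht) (sub_ne_zero.mpr (Ne.symm hab))
    · simp [V2]
    · simp [V2]
  · have h1 : orderOf (mk2 s (s * a)) = p := orderOf_mk2 (by tauto)
    have h2 : orderOf (mk2 (tP s a b c) (tP s a b c * b)) = p := orderOf_mk2 (by tauto)
    have h3 : orderOf (mk2 (rP s a b c) (rP s a b c * c)) = p := orderOf_mk2 (by tauto)
    show List.Perm [orderOf (mk2 s (s*a)), orderOf (mk2 _ _), orderOf (mk2 _ _)] [p, p, p]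
    rw [h1, h2, h3]

/-- powers of a V1 entry meeting powers of an entry on a line of slope `e ∉ {0,1}` are trivial -/
lemma line_disj {x : Gp p} (hx : x ∈ V1 p) {z e : ZMod p} (hz : z ≠ 0) (he0 : e ≠ 0)
    (he1 : e ≠ 1) {j k : ℕ} (h : x ^ j = (mk2 z (z * e)) ^ k) : x ^ j = 1 := by
  have hV : x = mk2 1 0 ∨ x = mk2 0 1 ∨ x = mk2 (-1) (-1) := by
    simpa [V1] using hx
  rcases hV with rfl | rfl | rfl
  · refine pow_inter ?_ h
    have : (1 : ZMod p) * (z * e) - z * 0 = z * e := by ring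
    rw [this]
    exact mul_ne_zero hz he0
  · refine pow_inter ?_ h
    have : (0 : ZMod p) * (z * e) - z * 1 = -z := by ring
    rw [this]
    simpa using hz
  · refine pow_inter ?_ h
    have : (-1 : ZMod p) * (z * e) - z * (-1) = z * (1 - e) := by ring
    rw [this]
    exact mul_ne_zero hz (sub_ne_zero.mpr (Ne.symm he1))

include hs ha0 ha1 hb0 hb1 hc0 hc1 hab hac hbc in
lemma sigma_disj : SigmaSet (V1 p) ∩ SigmaSet (V2 s a b c) = {1} := by
  have ht := tP_ne hs hac hbc
  have hr := rP_ne hs hab hbc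
  rw [sigmaset_comm, sigmaset_comm]
  ext q
  simp only [Set.mem_inter_iff, Set.mem_setOf_eq, Set.mem_singleton_iff]
  constructor
  · rintro ⟨⟨x, hx, j, rfl⟩, ⟨x', hx', k, hk⟩⟩
    have hV2 : x' = mk2 s (s * a) ∨ x' = mk2 (tP s a b c) (tP s a b c * b)
        ∨ x' = mk2 (rP s a b c) (rP s a b c * c) := by
      simpa [V2] using hx'
    rcases hV2 with rfl | rfl | rfl
    · exact line_disj hx hs ha0 ha1 hk
    · exact line_disj hx ht hb0 hb1 hk
    · exact line_disj hx hr hc0 hc1 hk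
  · rintro rfl
    exact ⟨⟨mk2 1 0, by simp [V1], 0, by simp⟩,
      ⟨mk2 s (s * a), by simp [V2], 0, by simp⟩⟩

include hs ha0 ha1 hb0 hb1 hc0 hc1 hab hac hbc in
lemma mem_uram_V1V2 : (V1 p, V2 s a b c) ∈ URam (Gp p) [p, p, p] [p, p, p] :=
  ⟨sphsys_V1, sphsys_V2 hs ha0 ha1 hb0 hb1 hc0 hc1 hab hac hbc,
    sigma_disj hs ha0 ha1 hb0 hb1 hc0 hc1 hab hac hbc⟩

end V2props

end ZModPart

/-! ### Counting -/

section Counting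
variable (p : ℕ) [Fact p.Prime]

abbrev UU (p : ℕ) := URam (Gp p) [p, p, p] [p, p, p]

abbrev rr : ↥(UU p) → ↥(UU p) → Prop := fun P Q => RamRel P.1 Q.1

lemma hCount_eq : hCount (Gp p) [p, p, p] [p, p, p] = Nat.card (Quot (rr p)) := rfl

variable {p}

lemma uram_shape {P : List (Gp p) × List (Gp p)} (hP : P ∈ UU p) :
    ∃ x y u v, P.1 = [x, y, (x * y)⁻¹] ∧ P.2 = [u, v, (u * v)⁻¹] := by
  obtain ⟨x, y, h1⟩ := sphsys_shape hP.1
  obtain ⟨u, v, h2⟩ := sphsys_shape hP.2.1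
  exact ⟨x, y, u, v, h1, h2⟩

variable (p)

def Jmap : ↥(UU p) → Gp p × Gp p × Gp p × Gp p := fun P =>
  (P.val.1.headD 1, P.val.1.tail.headD 1, P.val.2.headD 1, P.val.2.tail.headD 1)

lemma Jmap_inj : Function.Injective (Jmap p) := by
  intro P Q h
  obtain ⟨x, y, u, v, h1, h2⟩ := uram_shape P.prop
  obtain ⟨x', y', u', v', h1', h2'⟩ := uram_shape Q.prop
  unfold Jmap at h
  rw [h1, h2, h1', h2'] at h
  simp only [List.headD_cons, List.tail_cons, Prod.mk.injEq] at h
  obtain ⟨e1, e2, e3, e4⟩ := h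
  apply Subtype.ext
  apply Prod.ext
  · rw [h1, h1', e1, e2]
  · rw [h2, h2', e3, e4]

instance : Finite ↥(UU p) := Finite.of_injective _ (Jmap_inj p)

instance : Finite (Quot (rr p)) :=
  Finite.of_surjective (Quot.mk (rr p)) Quot.mk_surjective

lemma card_UU_le : Nat.card ↥(UU p) ≤ p ^ 8 := by
  have h := Nat.card_le_card_of_injective _ (Jmap_inj p)
  have hM : Nat.card (Multiplicative (ZMod p)) = p := by
    rw [Nat.card_congr Multiplicative.toAdd, Nat.card_zmod]
  simp only [Nat.card_prod, hM] at h
  exact h.trans_eq (by ring)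

/-! #### Upper bound -/

/-- parameter space for (a chunk of) the automorphism group -/
abbrev Tset (p : ℕ) := {x : ZMod p // x ≠ 0} × ZMod p × ZMod p × {x : ZMod p // x ≠ 0}

lemma Tset_det (M : Tset p) :
    M.1.val * (M.1.val⁻¹ * (M.2.2.2.val + M.2.1 * M.2.2.1)) - M.2.1 * M.2.2.1 ≠ 0 := by
  obtain ⟨⟨a, ha⟩, b, c, ⟨e, he⟩⟩ := M
  simp only
  rw [← mul_assoc, mul_inv_cancel₀ ha, one_mul]
  simpa using he

noncomputable def psiAut (M : Tset p) : Gp p ≃* Gp p :=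
  matEquiv M.1.val M.2.1 M.2.2.1 (M.1.val⁻¹ * (M.2.2.2.val + M.2.1 * M.2.2.1)) (Tset_det p M)

noncomputable def psiMap : Quot (rr p) × Tset p → ↥(UU p) := fun x =>
  ⟨((x.1.out.val.1.map (psiAut p x.2), x.1.out.val.2.map (psiAut p x.2))),
    uram_map _ x.1.out.prop⟩

lemma psiMap_class (x : Quot (rr p) × Tset p) :
    Quot.mk (rr p) (psiMap p x) = x.1 := by
  have hrel : rr p x.1.out (psiMap p x) := by
    show RamRel _ _
    exact Or.inr (Or.inr (Or.inl ⟨psiAut p x.2, rfl, rfl⟩))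
  rw [← Quot.sound hrel, Quot.out_eq]

lemma psiMap_inj : Function.Injective (psiMap p) := by
  intro x x' h
  have hq : x.1 = x'.1 := by
    rw [← psiMap_class p x, ← psiMap_class p x', h]
  obtain ⟨q, M⟩ := x
  obtain ⟨q', M'⟩ := x'
  simp only at hq
  subst hq
  -- now the automorphisms agree on the generators of q.out
  have hval : (psiMap p (q, M)).val = (psiMap p (q, M')).val := by rw [h]
  obtain ⟨x, y, u, v, h1, h2⟩ := uram_shape q.out.prop
  have hlist : q.out.val.1.map (psiAut p M) = q.out.val.1.map (psiAut p M') :=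
    congrArg Prod.fst hval
  rw [h1] at hlist
  simp only [List.map_cons, List.map_nil, List.cons.injEq, and_true] at hlist
  have hphi : psiAut p M = psiAut p M' := by
    have hgen : Subgroup.closure {q.out.val.1.headD 1, q.out.val.1.tail.headD 1} = ⊤ :=
      sphsys_gen2 q.out.prop.1
    rw [h1] at hgen
    simp only [List.headD_cons, List.tail_cons] at hgen
    refine mulequiv_ext_of_closure hgen ?_
    intro g hg
    rcases hg with rfl | rfl
    · exact hlist.1
    · exact hlist.2.1
  -- evaluate at standard basis vectors to recover the parameters
  obtain ⟨⟨a, ha⟩, b, c, ⟨e, he⟩⟩ := M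
  obtain ⟨⟨a', ha'⟩, b', c', ⟨e', he'⟩⟩ := M'
  have h10 := congrArg (fun φ : Gp p ≃* Gp p => φ (mk2 1 0)) hphi
  have h01 := congrArg (fun φ : Gp p ≃* Gp p => φ (mk2 0 1)) hphi
  simp only [psiAut, matEquiv_mk2, mul_one, mul_zero, add_zero, zero_add] at h10 h01
  obtain ⟨haa, hcc⟩ := mk2_inj h10
  obtain ⟨hbb, hdd⟩ := mk2_inj h01
  subst haa; subst hbb; subst hcc
  have hee : e = e' := by
    have := mul_left_cancel₀ (inv_ne_zero ha) hdd
    have h2 := add_right_cancel this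
    exact h2
  subst hee
  rfl

lemma upper_nat : Nat.card (Quot (rr p)) * ((p - 1) * (p * (p * (p - 1)))) ≤ p ^ 8 := by
  have h := Nat.card_le_card_of_injective _ (psiMap_inj p)
  have hT : Nat.card (Tset p) = (p - 1) * (p * (p * (p - 1))) := by
    have hu : Nat.card {x : ZMod p // x ≠ 0} = p - 1 := by
      rw [Nat.card_eq_fintype_card, Fintype.card_subtype_compl, ZMod.card,
        Fintype.card_subtype_eq]
    simp only [Nat.card_prod, hu, Nat.card_zmod]
  rw [Nat.card_prod, hT] at h
  exact h.trans (card_UU_le p)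

/-! #### Lower bound: fibers of the quotient map over pairs with first component `V1`
have at most `3 * 3 * 6 * 2` elements. -/

/-- `List.indexOf` pinned to the `DecidableEq`-derived `BEq` instance. -/
def idx {α : Type*} [DecidableEq α] (a : α) (l : List α) : ℕ :=
  @List.idxOf α instBEqOfDecidableEq a l

lemma idx_lt {α : Type*} [DecidableEq α] {a : α} {l : List α} (h : a ∈ l) :
    idx a l < l.length := List.idxOf_lt_length_iff.mpr h

lemma idx_get {α : Type*} [DecidableEq α] {a : α} {l : List α} (h : idx a l < l.length) :
    l.get ⟨idx a l, h⟩ = a := List.idxOf_get h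

open Classical in
/-- Discrete data identifying an element of a fiber. -/
noncomputable def pickD (Pv Qv : List (Gp p) × List (Gp p)) (hR : RRel Pv Qv) :
    ℕ × ℕ × ℕ × Bool :=
  if Qv.1.Perm (Pv.1.map hR.choose) ∧ Qv.2.Perm (Pv.2.map hR.choose) then
    (idx (hR.choose (Pv.1.headD 1)) (V1 p), idx (hR.choose (Pv.1.tail.headD 1)) (V1 p),
      idx Qv.2 (Pv.2.map hR.choose).permutations, true)
  else
    (idx (hR.choose (Pv.2.headD 1)) (V1 p), idx (hR.choose (Pv.2.tail.headD 1)) (V1 p),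
      idx Qv.2 (Pv.1.map hR.choose).permutations, false)

lemma pickD_congr {Pv Pv' Qv : List (Gp p) × List (Gp p)} (h : Pv = Pv')
    (hR : RRel Pv Qv) (hR' : RRel Pv' Qv) : pickD p Pv Qv hR = pickD p Pv' Qv hR' := by
  subst h; rfl

variable {p}

lemma V1_length : (V1 p).length = 3 := rfl

lemma pickD_lt {Pv Qv : List (Gp p) × List (Gp p)} (hP : Pv ∈ UU p) (hQ : Qv ∈ UU p)
    (hQ1 : Qv.1 = V1 p) (hR : RRel Pv Qv) :
    (pickD p Pv Qv hR).1 < 3 ∧ (pickD p Pv Qv hR).2.1 < 3 ∧ (pickD p Pv Qv hR).2.2.1 < 6 := by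
  classical
  obtain ⟨x, y, u, v, hP1, hP2⟩ := uram_shape hP
  set φ := hR.choose with hφ
  have hspec := hR.choose_spec
  have hh1 : Pv.1.headD 1 = x := by rw [hP1]; rfl
  have ht1 : Pv.1.tail.headD 1 = y := by rw [hP1]; rfl
  have hh2 : Pv.2.headD 1 = u := by rw [hP2]; rfl
  have ht2 : Pv.2.tail.headD 1 = v := by rw [hP2]; rfl
  unfold pickD
  by_cases h1 : Qv.1.Perm (Pv.1.map φ) ∧ Qv.2.Perm (Pv.2.map φ)
  · rw [if_pos h1]
    have hmem : ∀ g ∈ Pv.1, φ g ∈ V1 p := by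
      intro g hg
      rw [← hQ1]
      exact (h1.1.mem_iff).mpr (List.mem_map_of_mem hg)
    have hx : φ x ∈ V1 p := hmem x (by rw [hP1]; simp)
    have hy : φ y ∈ V1 p := hmem y (by rw [hP1]; simp)
    have hk : Qv.2 ∈ (Pv.2.map φ).permutations := List.mem_permutations.mpr h1.2
    refine ⟨?_, ?_, ?_⟩
    · show idx (φ (Pv.1.headD 1)) (V1 p) < 3
      rw [hh1]
      exact lt_of_lt_of_eq (idx_lt hx) V1_length
    · show idx (φ (Pv.1.tail.headD 1)) (V1 p) < 3
      rw [ht1]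
      exact lt_of_lt_of_eq (idx_lt hy) V1_length
    · show idx Qv.2 (Pv.2.map φ).permutations < 6
      have hlen : (Pv.2.map φ).permutations.length = 6 := by
        rw [List.length_permutations, List.length_map, sphsys_len hP.2.1]
        rfl
      exact lt_of_lt_of_eq (idx_lt hk) hlen
  · rw [if_neg h1]
    have h2 := hspec.resolve_left h1
    have hmem : ∀ g ∈ Pv.2, φ g ∈ V1 p := by
      intro g hg
      rw [← hQ1]
      exact (h2.1.mem_iff).mpr (List.mem_map_of_mem hg)
    have hx : φ u ∈ V1 p := hmem u (by rw [hP2]; simp)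
    have hy : φ v ∈ V1 p := hmem v (by rw [hP2]; simp)
    have hk : Qv.2 ∈ (Pv.1.map φ).permutations := List.mem_permutations.mpr h2.2
    refine ⟨?_, ?_, ?_⟩
    · show idx (φ (Pv.2.headD 1)) (V1 p) < 3
      rw [hh2]
      exact lt_of_lt_of_eq (idx_lt hx) V1_length
    · show idx (φ (Pv.2.tail.headD 1)) (V1 p) < 3
      rw [ht2]
      exact lt_of_lt_of_eq (idx_lt hy) V1_length
    · show idx Qv.2 (Pv.1.map φ).permutations < 6
      have hlen : (Pv.1.map φ).permutations.length = 6 := by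
        rw [List.length_permutations, List.length_map, sphsys_len hP.1]
        rfl
      exact lt_of_lt_of_eq (idx_lt hk) hlen

lemma pickD_inj {Pv Qv Qv' : List (Gp p) × List (Gp p)} (hP : Pv ∈ UU p)
    (hQ1 : Qv.1 = V1 p) (hQ1' : Qv'.1 = V1 p) (hR : RRel Pv Qv) (hR' : RRel Pv Qv')
    (h : pickD p Pv Qv hR = pickD p Pv Qv' hR') : Qv = Qv' := by
  classical
  obtain ⟨x, y, u, v, hP1, hP2⟩ := uram_shape hP
  set φ := hR.choose with hφdef
  set φ' := hR'.choose with hφdef'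
  have hspec := hR.choose_spec
  have hspec' := hR'.choose_spec
  unfold pickD at h
  rw [← hφdef, ← hφdef'] at h
  have recover : ∀ (ψ : Gp p ≃* Gp p) (g : Gp p) (hg : ψ g ∈ V1 p) (i : ℕ),
      idx (ψ g) (V1 p) = i → ∀ (ψ' : Gp p ≃* Gp p) (g' : Gp p) (hg' : ψ' g' ∈ V1 p),
      idx (ψ' g') (V1 p) = i → ψ g = ψ' g' := by
    intro ψ g hg i hi ψ' g' hg' hi'
    have e1 : (V1 p).get ⟨idx (ψ g) (V1 p), idx_lt hg⟩ = ψ g := idx_get _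
    have e2 : (V1 p).get ⟨idx (ψ' g') (V1 p), idx_lt hg'⟩ = ψ' g' := idx_get _
    rw [← e1, ← e2]
    congr 1
    simp only [Fin.mk.injEq]
    rw [hi, hi']
  by_cases h1 : Qv.1.Perm (Pv.1.map φ) ∧ Qv.2.Perm (Pv.2.map φ) <;>
    by_cases h1' : Qv'.1.Perm (Pv.1.map φ') ∧ Qv'.2.Perm (Pv.2.map φ')
  · rw [if_pos h1, if_pos h1'] at h
    simp only [Prod.mk.injEq] at h
    obtain ⟨hi, hj, hk, -⟩ := h
    have hmem : ∀ g ∈ Pv.1, φ g ∈ V1 p := fun g hg => by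
      rw [← hQ1]; exact (h1.1.mem_iff).mpr (List.mem_map_of_mem hg)
    have hmem' : ∀ g ∈ Pv.1, φ' g ∈ V1 p := fun g hg => by
      rw [← hQ1']; exact (h1'.1.mem_iff).mpr (List.mem_map_of_mem hg)
    have hxm : x ∈ Pv.1 := by rw [hP1]; simp
    have hym : y ∈ Pv.1 := by rw [hP1]; simp
    rw [hP1] at hi hj
    simp only [List.headD_cons, List.tail_cons] at hi hj
    have hxx : φ x = φ' x := recover φ x (hmem x hxm) _ hi φ' x (hmem' x hxm) rfl
    have hyy : φ y = φ' y := recover φ y (hmem y hym) _ hj φ' y (hmem' y hym) rfl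
    have hgen : Subgroup.closure {x, y} = ⊤ := by
      have := sphsys_gen2 hP.1
      rw [hP1] at this
      simpa using this
    have hphi : φ = φ' := by
      refine mulequiv_ext_of_closure hgen ?_
      intro g hg
      rcases hg with rfl | rfl
      · exact hxx
      · exact hyy
    have hkm : Qv.2 ∈ (Pv.2.map φ).permutations := List.mem_permutations.mpr h1.2
    have hkm' : Qv'.2 ∈ (Pv.2.map φ').permutations := List.mem_permutations.mpr h1'.2
    rw [← hphi] at hkm'
    have e1 : (Pv.2.map φ).permutations.get
        ⟨idx Qv.2 _, idx_lt hkm⟩ = Qv.2 := idx_get _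
    have e2 : (Pv.2.map φ).permutations.get
        ⟨idx Qv'.2 _, idx_lt hkm'⟩ = Qv'.2 := idx_get _
    have h22 : Qv.2 = Qv'.2 := by
      rw [← e1, ← e2]
      congr 1
      simp only [Fin.mk.injEq]
      rw [hk, hphi]
    exact Prod.ext (hQ1.trans hQ1'.symm) h22
  · rw [if_pos h1, if_neg h1'] at h
    simp only [Prod.mk.injEq] at h
    exact absurd h.2.2.2 (by simp)
  · rw [if_neg h1, if_pos h1'] at h
    simp only [Prod.mk.injEq] at h
    exact absurd h.2.2.2 (by simp)
  · rw [if_neg h1, if_neg h1'] at h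
    simp only [Prod.mk.injEq] at h
    obtain ⟨hi, hj, hk, -⟩ := h
    have h2 := hspec.resolve_left h1
    have h2' := hspec'.resolve_left h1'
    have hmem : ∀ g ∈ Pv.2, φ g ∈ V1 p := fun g hg => by
      rw [← hQ1]; exact (h2.1.mem_iff).mpr (List.mem_map_of_mem hg)
    have hmem' : ∀ g ∈ Pv.2, φ' g ∈ V1 p := fun g hg => by
      rw [← hQ1']; exact (h2'.1.mem_iff).mpr (List.mem_map_of_mem hg)
    have hxm : u ∈ Pv.2 := by rw [hP2]; simp
    have hym : v ∈ Pv.2 := by rw [hP2]; simp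
    rw [hP2] at hi hj
    simp only [List.headD_cons, List.tail_cons] at hi hj
    have hxx : φ u = φ' u := recover φ u (hmem u hxm) _ hi φ' u (hmem' u hxm) rfl
    have hyy : φ v = φ' v := recover φ v (hmem v hym) _ hj φ' v (hmem' v hym) rfl
    have hgen : Subgroup.closure {u, v} = ⊤ := by
      have := sphsys_gen2 hP.2.1
      rw [hP2] at this
      simpa using this
    have hphi : φ = φ' := by
      refine mulequiv_ext_of_closure hgen ?_
      intro g hg
      rcases hg with rfl | rfl
      · exact hxx
      · exact hyy
    have hkm : Qv.2 ∈ (Pv.1.map φ).permutations := List.mem_permutations.mpr h2.2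
    have hkm' : Qv'.2 ∈ (Pv.1.map φ').permutations := List.mem_permutations.mpr h2'.2
    rw [← hphi] at hkm'
    have e1 : (Pv.1.map φ).permutations.get
        ⟨idx Qv.2 _, idx_lt hkm⟩ = Qv.2 := idx_get _
    have e2 : (Pv.1.map φ).permutations.get
        ⟨idx Qv'.2 _, idx_lt hkm'⟩ = Qv'.2 := idx_get _
    have h22 : Qv.2 = Qv'.2 := by
      rw [← e1, ← e2]
      congr 1
      simp only [Fin.mk.injEq]
      rw [hk, hphi]
    exact Prod.ext (hQ1.trans hQ1'.symm) h22

variable (p)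

def finPack (x : ℕ × ℕ × ℕ × Bool) : Fin 3 × Fin 3 × Fin 6 × Bool :=
  (⟨x.1 % 3, Nat.mod_lt _ (by norm_num)⟩, ⟨x.2.1 % 3, Nat.mod_lt _ (by norm_num)⟩,
    ⟨x.2.2.1 % 6, Nat.mod_lt _ (by norm_num)⟩, x.2.2.2)

/-- the subtype of ramification structures whose first system is `V1` -/
abbrev WSub (p : ℕ) [Fact p.Prime] := {Q : ↥(UU p) // Q.val.1 = V1 p}

lemma eqvgen_rrel' {A B : ↥(UU p)} (h : Relation.EqvGen (rr p) A B) : RRel A.val B.val :=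
  eqvgen_rrel h

noncomputable def iotaW (Q : WSub p) : Quot (rr p) × (Fin 3 × Fin 3 × Fin 6 × Bool) :=
  (Quot.mk (rr p) Q.val,
    finPack (pickD p (Quot.mk (rr p) Q.val).out.val Q.val.val
      (eqvgen_rrel' p (Quot.eq.mp (Quot.out_eq _)))))

lemma iotaW_inj : Function.Injective (iotaW p) := by
  intro Q Q' heq
  have hq : Quot.mk (rr p) Q.val = Quot.mk (rr p) Q'.val :=
    congrArg Prod.fst heq
  have hPP : (Quot.mk (rr p) Q'.val).out = (Quot.mk (rr p) Q.val).out := by rw [hq]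
  set P := (Quot.mk (rr p) Q.val).out with hPdef
  have hR : RRel P.val Q.val.val := eqvgen_rrel' p (Quot.eq.mp (Quot.out_eq _))
  have hR'0 : RRel (Quot.mk (rr p) Q'.val).out.val Q'.val.val :=
    eqvgen_rrel' p (Quot.eq.mp (Quot.out_eq _))
  have hR' : RRel P.val Q'.val.val := by rw [← hPP]; exact hR'0
  have h2 : finPack (pickD p P.val Q.val.val hR) = finPack (pickD p P.val Q'.val.val hR') := by
    have := congrArg Prod.snd heq
    simp only [iotaW] at this
    rw [this]
    exact congrArg finPack (pickD_congr p (congrArg Subtype.val hPP) hR'0 hR')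
  have hlt := pickD_lt P.prop Q.val.prop Q.prop hR
  have hlt' := pickD_lt P.prop Q'.val.prop Q'.prop hR'
  have htup : pickD p P.val Q.val.val hR = pickD p P.val Q'.val.val hR' := by
    have c1 := congrArg (fun z => (z.1 : Fin 3).val) h2
    have c2 := congrArg (fun z => (z.2.1 : Fin 3).val) h2
    have c3 := congrArg (fun z => (z.2.2.1 : Fin 6).val) h2
    have c4 := congrArg (fun z => z.2.2.2) h2
    simp only [finPack] at c1 c2 c3 c4
    have e1 : (pickD p P.val Q.val.val hR).1 = (pickD p P.val Q'.val.val hR').1 := by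
      omega
    have e2 : (pickD p P.val Q.val.val hR).2.1 = (pickD p P.val Q'.val.val hR').2.1 := by
      omega
    have e3 : (pickD p P.val Q.val.val hR).2.2.1 = (pickD p P.val Q'.val.val hR').2.2.1 := by
      omega
    exact Prod.ext e1 (Prod.ext e2 (Prod.ext e3 c4))
  have := pickD_inj P.prop Q.prop Q'.prop hR hR' htup
  exact Subtype.ext (Subtype.ext this)

lemma lower_nat : Nat.card (WSub p) ≤ Nat.card (Quot (rr p)) * 108 := by
  have h := Nat.card_le_card_of_injective _ (iotaW_inj p)
  rw [Nat.card_prod] at h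
  refine h.trans ?_
  have : Nat.card (Fin 3 × Fin 3 × Fin 6 × Bool) = 108 := by
    simp [Nat.card_prod]
  rw [this]

end Counting

/-! ### The parametrized family: lower bound for `Nat.card (WSub p)` -/

section Family
variable {p : ℕ} [Fact p.Prime]

lemma cast_eq_iff {u v : ℕ} (hu : u < p) (hv : v < p) : (u : ZMod p) = v ↔ u = v := by
  constructor
  · intro h
    have := congrArg ZMod.val h
    rwa [ZMod.val_cast_of_lt hu, ZMod.val_cast_of_lt hv] at this
  · rintro rfl; rfl

/-- all the side conditions for the parameters coming from `Fin ((p-2)/3)` data -/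
lemma param_conds {i j k l : ℕ} (hi : i < (p-2)/3) (hj : j < (p-2)/3) (hk : k < (p-2)/3)
    (hl : l < (p-2)/3) :
    ((1 + l : ℕ) : ZMod p) ≠ 0 ∧
    ((2 + i : ℕ) : ZMod p) ≠ 0 ∧ ((2 + i : ℕ) : ZMod p) ≠ 1 ∧
    ((2 + (p-2)/3 + j : ℕ) : ZMod p) ≠ 0 ∧ ((2 + (p-2)/3 + j : ℕ) : ZMod p) ≠ 1 ∧
    ((2 + 2*((p-2)/3) + k : ℕ) : ZMod p) ≠ 0 ∧ ((2 + 2*((p-2)/3) + k : ℕ) : ZMod p) ≠ 1 ∧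
    ((2 + i : ℕ) : ZMod p) ≠ ((2 + (p-2)/3 + j : ℕ) : ZMod p) ∧
    ((2 + i : ℕ) : ZMod p) ≠ ((2 + 2*((p-2)/3) + k : ℕ) : ZMod p) ∧
    ((2 + (p-2)/3 + j : ℕ) : ZMod p) ≠ ((2 + 2*((p-2)/3) + k : ℕ) : ZMod p) := by
  have hm : 2 + 3*((p-2)/3) ≤ p := by omega
  have h0 : (0 : ZMod p) = ((0 : ℕ) : ZMod p) := by norm_num
  have h1 : (1 : ZMod p) = ((1 : ℕ) : ZMod p) := by norm_num
  refine ⟨?_, ?_, ?_, ?_, ?_, ?_, ?_, ?_, ?_, ?_⟩ <;>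
    first
    | (rw [h0, Ne, cast_eq_iff (by omega) (by omega)]; omega)
    | (rw [h1, Ne, cast_eq_iff (by omega) (by omega)]; omega)
    | (rw [Ne, cast_eq_iff (by omega) (by omega)]; omega)

/-- The injection of the parameter space into `WSub`. -/
noncomputable def FW (x : Fin ((p-2)/3) × Fin ((p-2)/3) × Fin ((p-2)/3) × Fin ((p-2)/3)) :
    WSub p :=
  ⟨⟨(V1 p, V2 ((1 + x.2.2.2.val : ℕ) : ZMod p) ((2 + x.1.val : ℕ) : ZMod p)
      ((2 + (p-2)/3 + x.2.1.val : ℕ) : ZMod p) ((2 + 2*((p-2)/3) + x.2.2.1.val : ℕ) : ZMod p)),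
    mem_uram_V1V2
      (param_conds x.1.isLt x.2.1.isLt x.2.2.1.isLt x.2.2.2.isLt).1
      (param_conds x.1.isLt x.2.1.isLt x.2.2.1.isLt x.2.2.2.isLt).2.1
      (param_conds x.1.isLt x.2.1.isLt x.2.2.1.isLt x.2.2.2.isLt).2.2.1
      (param_conds x.1.isLt x.2.1.isLt x.2.2.1.isLt x.2.2.2.isLt).2.2.2.1
      (param_conds x.1.isLt x.2.1.isLt x.2.2.1.isLt x.2.2.2.isLt).2.2.2.2.1
      (param_conds x.1.isLt x.2.1.isLt x.2.2.1.isLt x.2.2.2.isLt).2.2.2.2.2.1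
      (param_conds x.1.isLt x.2.1.isLt x.2.2.1.isLt x.2.2.2.isLt).2.2.2.2.2.2.1
      (param_conds x.1.isLt x.2.1.isLt x.2.2.1.isLt x.2.2.2.isLt).2.2.2.2.2.2.2.1
      (param_conds x.1.isLt x.2.1.isLt x.2.2.1.isLt x.2.2.2.isLt).2.2.2.2.2.2.2.2.1
      (param_conds x.1.isLt x.2.1.isLt x.2.2.1.isLt x.2.2.2.isLt).2.2.2.2.2.2.2.2.2⟩, rfl⟩

lemma FW_val (x : Fin ((p-2)/3) × Fin ((p-2)/3) × Fin ((p-2)/3) × Fin ((p-2)/3)) :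
    (FW x).val.val = (V1 p, V2 ((1 + x.2.2.2.val : ℕ) : ZMod p) ((2 + x.1.val : ℕ) : ZMod p)
      ((2 + (p-2)/3 + x.2.1.val : ℕ) : ZMod p)
      ((2 + 2*((p-2)/3) + x.2.2.1.val : ℕ) : ZMod p)) := rfl

lemma FW_inj : Function.Injective (FW (p := p)) := by
  intro x x' heq
  obtain ⟨C0, C1, C2, C3, C4, C5, C6, C7, C8, C9⟩ :=
    param_conds x.1.isLt x.2.1.isLt x.2.2.1.isLt x.2.2.2.isLt
  obtain ⟨D0, D1, D2, D3, D4, D5, D6, D7, D8, D9⟩ :=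
    param_conds x'.1.isLt x'.2.1.isLt x'.2.2.1.isLt x'.2.2.2.isLt
  have hval : (FW x).val.val = (FW x').val.val := by rw [heq]
  rw [FW_val, FW_val] at hval
  set s := ((1 + x.2.2.2.val : ℕ) : ZMod p)
  set a := ((2 + x.1.val : ℕ) : ZMod p)
  set b := ((2 + (p-2)/3 + x.2.1.val : ℕ) : ZMod p)
  set c := ((2 + 2*((p-2)/3) + x.2.2.1.val : ℕ) : ZMod p)
  set s' := ((1 + x'.2.2.2.val : ℕ) : ZMod p)
  set a' := ((2 + x'.1.val : ℕ) : ZMod p)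
  set b' := ((2 + (p-2)/3 + x'.2.1.val : ℕ) : ZMod p)
  set c' := ((2 + 2*((p-2)/3) + x'.2.2.1.val : ℕ) : ZMod p)
  have hV2 : V2 s a b c = V2 s' a' b' c' := congrArg Prod.snd hval
  unfold V2 at hV2
  simp only [List.cons.injEq, and_true] at hV2
  obtain ⟨h1, h2, h3⟩ := hV2
  obtain ⟨hs, hsa⟩ := mk2_inj h1
  obtain ⟨ht, htb⟩ := mk2_inj h2
  obtain ⟨hr, hrc⟩ := mk2_inj h3
  have hlt := x.1.isLt
  have hm : 2 + 3*((p-2)/3) ≤ p := by omega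
  have hsv : (1 + x.2.2.2.val : ℕ) = (1 + x'.2.2.2.val : ℕ) :=
    (cast_eq_iff (by omega) (by omega)).mp hs
  have ha : a = a' := by
    rw [hs] at hsa
    exact mul_left_cancel₀ D0 hsa
  have hav : (2 + x.1.val : ℕ) = (2 + x'.1.val : ℕ) :=
    (cast_eq_iff (by omega) (by omega)).mp ha
  have htne : tP s a b c ≠ 0 := tP_ne C0 C8 C9
  have hb : b = b' := by
    rw [ht] at htb
    have htne' : tP s' a' b' c' ≠ 0 := tP_ne D0 D8 D9
    exact mul_left_cancel₀ htne' htb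
  have hbv : (2 + (p-2)/3 + x.2.1.val : ℕ) = (2 + (p-2)/3 + x'.2.1.val : ℕ) :=
    (cast_eq_iff (by omega) (by omega)).mp hb
  have hc : c = c' := by
    rw [hr] at hrc
    have hrne' : rP s' a' b' c' ≠ 0 := rP_ne D0 D7 D9
    exact mul_left_cancel₀ hrne' hrc
  have hcv : (2 + 2*((p-2)/3) + x.2.2.1.val : ℕ) = (2 + 2*((p-2)/3) + x'.2.2.1.val : ℕ) :=
    (cast_eq_iff (by omega) (by omega)).mp hc
  have e1 : x.1 = x'.1 := Fin.ext (by omega)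
  have e2 : x.2.1 = x'.2.1 := Fin.ext (by omega)
  have e3 : x.2.2.1 = x'.2.2.1 := Fin.ext (by omega)
  have e4 : x.2.2.2 = x'.2.2.2 := Fin.ext (by omega)
  exact Prod.ext e1 (Prod.ext e2 (Prod.ext e3 e4))

lemma card_WSub_ge : ((p-2)/3)^4 ≤ Nat.card (WSub p) := by
  have h := Nat.card_le_card_of_injective _ (FW_inj (p := p))
  refine le_trans ?_ h
  have : Nat.card (Fin ((p-2)/3) × Fin ((p-2)/3) × Fin ((p-2)/3) × Fin ((p-2)/3))
      = ((p-2)/3)^4 := by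
    simp [Nat.card_prod]
    ring
  rw [this]

end Family


/-- Corollary 4.8: for primes `p ≥ 5`, with `G_p = (ℤ/pℤ)²` and `τ_p = (p,p,p)`,
`h(G_p;τ_p,τ_p) = Θ(χ(G_p;τ_p,τ_p)²)`, where `χ(G_p;τ_p,τ_p) = (p-3)²/4`. -/
theorem stmt14 :
    ∃ c₁ c₂ : ℝ, 0 < c₁ ∧ 0 < c₂ ∧ ∀ p : ℕ, p.Prime → 5 ≤ p →
      c₁ * (((p : ℝ) - 3) ^ 2 / 4) ^ 2 ≤
        (hCount (Multiplicative (ZMod p) × Multiplicative (ZMod p))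
          [p, p, p] [p, p, p] : ℝ) ∧
      (hCount (Multiplicative (ZMod p) × Multiplicative (ZMod p))
          [p, p, p] [p, p, p] : ℝ) ≤
        c₂ * (((p : ℝ) - 3) ^ 2 / 4) ^ 2 := by
  refine ⟨1/1728, 2000, by norm_num, by norm_num, ?_⟩
  intro p hp hp5
  haveI : Fact p.Prime := ⟨hp⟩
  set hC : ℕ := hCount (Multiplicative (ZMod p) × Multiplicative (ZMod p)) [p, p, p] [p, p, p]
    with hCdef
  set m : ℕ := (p - 2)/3 with hmdef
  have hlow : m ^ 4 ≤ hC * 108 := by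
    calc m ^ 4 ≤ Nat.card (WSub p) := card_WSub_ge
      _ ≤ Nat.card (Quot (rr p)) * 108 := lower_nat p
      _ = hC * 108 := by rw [hCdef, hCount_eq]
  have hup : hC * ((p - 1) * (p * (p * (p - 1)))) ≤ p ^ 8 := by
    rw [hCdef, hCount_eq]
    exact upper_nat p
  have hm : p - 3 ≤ 4 * m := by omega
  have hP5 : (5 : ℝ) ≤ ((p:ℝ)) := by exact_mod_cast hp5
  have hP3 : ((p - 3 : ℕ) : ℝ) = ((p:ℝ)) - 3 := by
    rw [Nat.cast_sub (by omega)]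
    norm_num
  have hP1 : ((p - 1 : ℕ) : ℝ) = ((p:ℝ)) - 1 := by
    rw [Nat.cast_sub (by omega)]
    norm_num
  constructor
  · -- lower bound
    have hcast : ((m : ℝ)) ^ 4 ≤ (hC : ℝ) * 108 := by exact_mod_cast hlow
    have h1 : ((p:ℝ)) - 3 ≤ 4 * (m : ℝ) := by
      rw [← hP3]
      exact_mod_cast hm
    have h0 : (0 : ℝ) ≤ ((p:ℝ)) - 3 := by linarith
    have h2 : (((p:ℝ)) - 3) ^ 4 ≤ (4 * (m : ℝ)) ^ 4 := pow_le_pow_left₀ h0 h1 4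
    have h3 : (((p:ℝ)) - 3) ^ 4 ≤ 27648 * (hC : ℝ) := by nlinarith [hcast, h2]
    have hgoal : (1/1728 : ℝ) * ((((p:ℝ)) - 3) ^ 2 / 4) ^ 2 = (((p:ℝ)) - 3) ^ 4 / 27648 := by ring
    rw [hgoal]
    linarith
  · -- upper bound
    have hcast : (hC : ℝ) * (((p - 1 : ℕ) : ℝ) * (((p:ℝ)) * (((p:ℝ)) * ((p - 1 : ℕ) : ℝ)))) ≤ ((p:ℝ)) ^ 8 := by
      exact_mod_cast hup
    rw [hP1] at hcast
    have hh0 : (0 : ℝ) ≤ (hC : ℝ) := Nat.cast_nonneg _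
    have e2 : (16/25 : ℝ) * ((p:ℝ)) ^ 2 ≤ (((p:ℝ)) - 1) ^ 2 := by nlinarith
    have key : (hC : ℝ) * ((16/25) * ((p:ℝ)) ^ 2 * ((p:ℝ)) ^ 2) ≤ ((p:ℝ)) ^ 8 := by
      have hnn : (0 : ℝ) ≤ (hC : ℝ) * ((p:ℝ)) ^ 2 := by positivity
      nlinarith [mul_le_mul_of_nonneg_left e2 hnn, hcast]
    have hP4 : (0 : ℝ) < ((p:ℝ)) ^ 4 := by positivity
    have h16 : (16/25 : ℝ) * (hC : ℝ) ≤ ((p:ℝ)) ^ 4 := by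
      refine le_of_mul_le_mul_right ?_ hP4
      calc (16/25 : ℝ) * (hC : ℝ) * ((p:ℝ)) ^ 4 = (hC : ℝ) * ((16/25) * ((p:ℝ)) ^ 2 * ((p:ℝ)) ^ 2) := by ring
        _ ≤ ((p:ℝ)) ^ 8 := key
        _ = ((p:ℝ)) ^ 4 * ((p:ℝ)) ^ 4 := by ring
    have e5 : 16 * ((p:ℝ)) ^ 4 ≤ 625 * (((p:ℝ)) - 3) ^ 4 := by
      have := pow_le_pow_left₀ (by linarith : (0:ℝ) ≤ 2 * ((p:ℝ))) (by linarith : 2 * ((p:ℝ)) ≤ 5 * (((p:ℝ)) - 3)) 4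
      nlinarith [this]
    have hgoal : (2000 : ℝ) * ((((p:ℝ)) - 3) ^ 2 / 4) ^ 2 = 125 * (((p:ℝ)) - 3) ^ 4 := by ring
    rw [hgoal]
    have hnn4 : (0 : ℝ) ≤ (((p:ℝ)) - 3) ^ 4 := by positivity
    linarith
end
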